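/- Theorem 6 (interaction helps under log-loss): There exists a joint probability distribution P_{X1,Y1,X2} on binary X1, X2, Y1 (with Y2 empty), of the form (X1,X2) ~ DSBS(p) and Y1 = X1 xor N with N ~ Ber(r) independent of X1, and a distortion pair D = (infinity, D) under log-loss distortion, such that the optimal one-round sum leakage initiated at agent A strictly exceeds the optimal two-round sum leakage initiated at agent B: L^A_{sum,1}(P_{X1,Y1,X2}, D) > L^B_{sum,2}(P_{X1,Y1,X2}, D). Equivalently, eta^A_1 fails to be concave on the marginal perturbation set P_{X1,Y1|X2}(P) x D^2, so by the equivalence of the non-interaction conditions, two rounds of interaction strictly reduce leakage. -/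

import Mathlib

open scoped BigOperators ENNReal

noncomputable section

/-- A probability mass function on a finite type. -/
def IsPMF {α : Type*} [Fintype α] (p : α → ℝ) : Prop :=
  (∀ a, 0 ≤ p a) ∧ ∑ a, p a = 1

/-- Shannon entropy in bits (logarithm base 2). -/
def Hent2 {α : Type*} [Fintype α] (p : α → ℝ) : ℝ :=
  ∑ a, -(p a * Real.logb 2 (p a))

open Classical in
/-- Distribution (pushforward) of a random variable `f` under a joint pmf `q`. -/
def pushf {Ω α : Type*} [Fintype Ω] (q : Ω → ℝ) (f : Ω → α) : α → ℝ :=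
  fun a => ∑ ω, if f ω = a then q ω else 0

/-- Entropy (in bits) of a random variable `f` under joint pmf `q`. -/
def HRV2 {Ω α : Type*} [Fintype Ω] [Fintype α] (q : Ω → ℝ) (f : Ω → α) : ℝ :=
  Hent2 (pushf q f)

/-- Mutual information `I(f;g)` in bits under joint pmf `q`. -/
def MIrv2 {Ω α β : Type*} [Fintype Ω] [Fintype α] [Fintype β]
    (q : Ω → ℝ) (f : Ω → α) (g : Ω → β) : ℝ :=
  HRV2 q f + HRV2 q g - HRV2 q (fun ω => (f ω, g ω))

/-- Conditional entropy `H(f | g)` in bits under joint pmf `q`. -/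
def condEntRV2 {Ω α β : Type*} [Fintype Ω] [Fintype α] [Fintype β]
    (q : Ω → ℝ) (f : Ω → α) (g : Ω → β) : ℝ :=
  HRV2 q (fun ω => (f ω, g ω)) - HRV2 q g

/-- Conditional mutual information `I(f ; g | h)` in bits under joint pmf `q`. -/
def condMIrv2 {Ω α β γ : Type*} [Fintype Ω] [Fintype α] [Fintype β] [Fintype γ]
    (q : Ω → ℝ) (f : Ω → α) (g : Ω → β) (h : Ω → γ) : ℝ :=
  condEntRV2 q f h + condEntRV2 q g h - condEntRV2 q (fun ω => (f ω, g ω)) h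

/-- Binary entropy function (in bits). -/
def binH (t : ℝ) : ℝ := -(t * Real.logb 2 t) - ((1 - t) * Real.logb 2 (1 - t))


/-- Joint pmf of `(X1, Y1, X2)` with `(X1, X2) ~ DSBS(p)` and `Y1 = X1 ⊕ N`,
`N ~ Ber(r)` independent of `X1` (`Y2` is empty). -/
def srcDSBSN (p r : ℝ) : Bool × Bool × Bool → ℝ :=
  fun w => (if w.1 = w.2.2 then (1 - p) / 2 else p / 2) *
    (if w.2.1 = w.1 then 1 - r else r)

/-- The optimal one-round sum leakage initiated at agent A under the log-loss distortion
constraint `H(X1 | X2, U1) ≤ D` at agent B (`Y2` is empty, so the sum leakage is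
`I(Y1; U1, X2)`). -/
def LsumA1LL (P : Bool × Bool × Bool → ℝ) (D : ℝ) : EReal :=
  sInf { L : EReal | ∃ (nU : ℕ) (κ : Bool → Fin nU → ℝ)
    (_ : ∀ x v, 0 ≤ κ x v) (_ : ∀ x, ∑ v, κ x v = 1),
    condEntRV2 (fun w : Bool × Bool × Bool × Fin nU =>
        P (w.1, w.2.1, w.2.2.1) * κ w.1 w.2.2.2)
      (fun w => w.1) (fun w => (w.2.2.1, w.2.2.2)) ≤ D ∧
    L = ((MIrv2 (fun w : Bool × Bool × Bool × Fin nU =>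
        P (w.1, w.2.1, w.2.2.1) * κ w.1 w.2.2.2)
      (fun w => w.2.1) (fun w => (w.2.2.2, w.2.2.1)) : ℝ) : EReal) }

/-- The optimal two-round sum leakage initiated at agent B (`U1` generated from `X2`,
then `U2` generated from `(X1, U1)`) under the same log-loss distortion constraint
`H(X1 | X2, U1, U2) ≤ D` at agent B. -/
def LsumB2LL (P : Bool × Bool × Bool → ℝ) (D : ℝ) : EReal :=
  sInf { L : EReal | ∃ (n1 n2 : ℕ)
    (κ1 : Bool → Fin n1 → ℝ) (κ2 : Bool → Fin n1 → Fin n2 → ℝ)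
    (_ : ∀ x v, 0 ≤ κ1 x v) (_ : ∀ x, ∑ v, κ1 x v = 1)
    (_ : ∀ x u v, 0 ≤ κ2 x u v) (_ : ∀ x u, ∑ v, κ2 x u v = 1),
    condEntRV2 (fun w : Bool × Bool × Bool × Fin n1 × Fin n2 =>
        P (w.1, w.2.1, w.2.2.1) * κ1 w.2.2.1 w.2.2.2.1 * κ2 w.1 w.2.2.2.1 w.2.2.2.2)
      (fun w => w.1) (fun w => (w.2.2.1, w.2.2.2)) ≤ D ∧
    L = ((MIrv2 (fun w : Bool × Bool × Bool × Fin n1 × Fin n2 =>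
        P (w.1, w.2.1, w.2.2.1) * κ1 w.2.2.1 w.2.2.2.1 * κ2 w.1 w.2.2.2.1 w.2.2.2.2)
      (fun w => w.2.1) (fun w => (w.2.2.2, w.2.2.1)) : ℝ) : EReal) }


namespace T6
open Real

def cbq : ℝ := 265/1449

/-- The core function (natural-log scaled): `Φ a ≥ 0` on `[0,1]` is the key inequality. -/
def Phi (a : ℝ) : ℝ :=
  cbq * negMulLog (3/4 + -(3/4)*a) + cbq * negMulLog (1/4 + -(1/4)*a)
  + cbq * negMulLog (0 + (1/4)*a) + cbq * negMulLog (0 + (3/4)*a)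
  + (1-cbq) * negMulLog (3/4 + -(1/2)*a) + (1-cbq) * negMulLog (1/4 + (1/2)*a)
  - negMulLog (9/16 + -(1/2)*a) - negMulLog (1/16 + (1/2)*a)
  + (negMulLog (1/4) + negMulLog (3/4) - 2 * negMulLog (3/16))

def Phi' (a : ℝ) : ℝ :=
  cbq * (-(3/4) * (-Real.log (3/4 + -(3/4)*a) - 1))
  + cbq * (-(1/4) * (-Real.log (1/4 + -(1/4)*a) - 1))
  + cbq * ((1/4) * (-Real.log (0 + (1/4)*a) - 1))
  + cbq * ((3/4) * (-Real.log (0 + (3/4)*a) - 1))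
  + (1-cbq) * (-(1/2) * (-Real.log (3/4 + -(1/2)*a) - 1))
  + (1-cbq) * ((1/2) * (-Real.log (1/4 + (1/2)*a) - 1))
  - (-(1/2) * (-Real.log (9/16 + -(1/2)*a) - 1))
  - ((1/2) * (-Real.log (1/16 + (1/2)*a) - 1))

def Phi'' (a : ℝ) : ℝ :=
  cbq * (-(-(3/4) * -(3/4)) * (3/4 + -(3/4)*a)⁻¹)
  + cbq * (-(-(1/4) * -(1/4)) * (1/4 + -(1/4)*a)⁻¹)
  + cbq * (-((1/4) * (1/4)) * (0 + (1/4)*a)⁻¹)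
  + cbq * (-((3/4) * (3/4)) * (0 + (3/4)*a)⁻¹)
  + (1-cbq) * (-(-(1/2) * -(1/2)) * (3/4 + -(1/2)*a)⁻¹)
  + (1-cbq) * (-((1/2) * (1/2)) * (1/4 + (1/2)*a)⁻¹)
  - (-(-(1/2) * -(1/2)) * (9/16 + -(1/2)*a)⁻¹)
  - (-((1/2) * (1/2)) * (1/16 + (1/2)*a)⁻¹)

lemma hasDerivAt_term (c d x : ℝ) (h : c + d*x ≠ 0) :
    HasDerivAt (fun a => negMulLog (c + d*a)) (d * (-Real.log (c + d*x) - 1)) x := by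
  have h1 : HasDerivAt (fun a : ℝ => c + d*a) d x := by
    simpa using ((hasDerivAt_id x).const_mul d).const_add c
  have := (Real.hasDerivAt_negMulLog h).comp x h1
  exact this.congr_deriv (by ring)

lemma hasDerivAt_term' (c d x : ℝ) (h : 0 < c + d*x) :
    HasDerivAt (fun a => d * (-Real.log (c + d*a) - 1)) (-(d*d) * (c + d*x)⁻¹) x := by
  have h1 : HasDerivAt (fun a : ℝ => c + d*a) d x := by
    simpa using ((hasDerivAt_id x).const_mul d).const_add c
  have h2 : HasDerivAt (fun a => Real.log (c + d*a)) ((c+d*x)⁻¹ * d) x :=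
    by have := (Real.hasDerivAt_log h.ne').comp x h1; exact this
  have h3 : HasDerivAt (fun a => -Real.log (c + d*a) - 1) (-((c+d*x)⁻¹ * d)) x :=
    (h2.neg).sub_const 1
  have := h3.const_mul d
  exact this.congr_deriv (by ring)

lemma Phi_hasDeriv {x : ℝ} (hx : x ∈ Set.Ioo (0:ℝ) 1) : HasDerivAt Phi (Phi' x) x := by
  obtain ⟨h0, h1⟩ := hx
  have A1 : (3:ℝ)/4 + -(3/4)*x ≠ 0 := by nlinarith
  have A2 : (1:ℝ)/4 + -(1/4)*x ≠ 0 := by nlinarith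
  have A3 : (0:ℝ) + (1/4)*x ≠ 0 := by nlinarith
  have A4 : (0:ℝ) + (3/4)*x ≠ 0 := by nlinarith
  have A5 : (3:ℝ)/4 + -(1/2)*x ≠ 0 := by nlinarith
  have A6 : (1:ℝ)/4 + (1/2)*x ≠ 0 := by nlinarith
  have A7 : (9:ℝ)/16 + -(1/2)*x ≠ 0 := by nlinarith
  have A8 : (1:ℝ)/16 + (1/2)*x ≠ 0 := by nlinarith
  have T1 := (hasDerivAt_term (3/4) (-(3/4)) x A1).const_mul cbq
  have T2 := (hasDerivAt_term (1/4) (-(1/4)) x A2).const_mul cbq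
  have T3 := (hasDerivAt_term 0 (1/4) x A3).const_mul cbq
  have T4 := (hasDerivAt_term 0 (3/4) x A4).const_mul cbq
  have T5 := (hasDerivAt_term (3/4) (-(1/2)) x A5).const_mul (1-cbq)
  have T6 := (hasDerivAt_term (1/4) (1/2) x A6).const_mul (1-cbq)
  have T7 := hasDerivAt_term (9/16) (-(1/2)) x A7
  have T8 := hasDerivAt_term (1/16) (1/2) x A8
  exact (((((((T1.add T2).add T3).add T4).add T5).add T6).sub T7).sub T8).add_const
    (negMulLog (1/4) + negMulLog (3/4) - 2 * negMulLog (3/16))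

lemma Phi'_hasDeriv {x : ℝ} (hx : x ∈ Set.Ioo (0:ℝ) 1) : HasDerivAt Phi' (Phi'' x) x := by
  obtain ⟨h0, h1⟩ := hx
  have A1 : (0:ℝ) < 3/4 + -(3/4)*x := by nlinarith
  have A2 : (0:ℝ) < 1/4 + -(1/4)*x := by nlinarith
  have A3 : (0:ℝ) < 0 + (1/4)*x := by nlinarith
  have A4 : (0:ℝ) < 0 + (3/4)*x := by nlinarith
  have A5 : (0:ℝ) < 3/4 + -(1/2)*x := by nlinarith
  have A6 : (0:ℝ) < 1/4 + (1/2)*x := by nlinarith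
  have A7 : (0:ℝ) < 9/16 + -(1/2)*x := by nlinarith
  have A8 : (0:ℝ) < 1/16 + (1/2)*x := by nlinarith
  have T1 := (hasDerivAt_term' (3/4) (-(3/4)) x A1).const_mul cbq
  have T2 := (hasDerivAt_term' (1/4) (-(1/4)) x A2).const_mul cbq
  have T3 := (hasDerivAt_term' 0 (1/4) x A3).const_mul cbq
  have T4 := (hasDerivAt_term' 0 (3/4) x A4).const_mul cbq
  have T5 := (hasDerivAt_term' (3/4) (-(1/2)) x A5).const_mul (1-cbq)
  have T6 := (hasDerivAt_term' (1/4) (1/2) x A6).const_mul (1-cbq)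
  have T7 := hasDerivAt_term' (9/16) (-(1/2)) x A7
  have T8 := hasDerivAt_term' (1/16) (1/2) x A8
  exact ((((((T1.add T2).add T3).add T4).add T5).add T6).sub T7).sub T8


lemma Phi''_eq {x : ℝ} (h0 : 0 < x) (h1 : x < 1) :
    Phi'' x = -((5 - 36*x + 36*x^2) * ((8/3)*x^2 - (8/3)*x + 159/161)) /
      (x * (1-x) * (3-2*x) * (1+2*x) * (9-8*x) * (1+8*x)) := by
  have B1 : x ≠ 0 := h0.ne'
  have B2 : (1:ℝ) - x ≠ 0 := by nlinarith
  have B3 : (3:ℝ) - 2*x ≠ 0 := by nlinarith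
  have B4 : (1:ℝ) + 2*x ≠ 0 := by nlinarith
  have B5 : (9:ℝ) - 8*x ≠ 0 := by nlinarith
  have B6 : (1:ℝ) + 8*x ≠ 0 := by nlinarith
  have E1 : (3:ℝ)/4 + -(3/4)*x = (3/4) * (1 - x) := by ring
  have E2 : (1:ℝ)/4 + -(1/4)*x = (1/4) * (1 - x) := by ring
  have E3 : (0:ℝ) + (1/4)*x = (1/4) * x := by ring
  have E4 : (0:ℝ) + (3/4)*x = (3/4) * x := by ring
  have E5 : (3:ℝ)/4 + -(1/2)*x = (1/4) * (3 - 2*x) := by ring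
  have E6 : (1:ℝ)/4 + (1/2)*x = (1/4) * (1 + 2*x) := by ring
  have E7 : (9:ℝ)/16 + -(1/2)*x = (1/16) * (9 - 8*x) := by ring
  have E8 : (1:ℝ)/16 + (1/2)*x = (1/16) * (1 + 8*x) := by ring
  unfold Phi'' cbq
  rw [E1, E2, E3, E4, E5, E6, E7, E8]
  rw [mul_inv, mul_inv, mul_inv, mul_inv, mul_inv, mul_inv, mul_inv, mul_inv]
  have B3' : (3:ℝ) - x*2 ≠ 0 := by nlinarith
  have B5' : (9:ℝ) - x*8 ≠ 0 := by nlinarith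
  field_simp
  ring

lemma Phi''_nonpos_left {x : ℝ} (h0 : 0 < x) (h1 : x < 1/6) : Phi'' x ≤ 0 := by
  rw [Phi''_eq h0 (by linarith)]
  have hQ : (0:ℝ) < (8/3)*x^2 - (8/3)*x + 159/161 := by nlinarith [sq_nonneg (x - 1/2)]
  have hP : (0:ℝ) ≤ 5 - 36*x + 36*x^2 := by nlinarith
  have hD : (0:ℝ) < x * (1-x) * (3-2*x) * (1+2*x) * (9-8*x) * (1+8*x) := by
    have c1 : (0:ℝ) < x := by linarith
    have c2 : (0:ℝ) < 1-x := by linarith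
    have c3 : (0:ℝ) < 3-2*x := by linarith
    have c4 : (0:ℝ) < 1+2*x := by linarith
    have c5 : (0:ℝ) < 9-8*x := by linarith
    have c6 : (0:ℝ) < 1+8*x := by linarith
    exact mul_pos (mul_pos (mul_pos (mul_pos (mul_pos c1 c2) c3) c4) c5) c6
  apply div_nonpos_of_nonpos_of_nonneg _ hD.le
  nlinarith [mul_nonneg hP hQ.le]

lemma Phi''_nonpos_right {x : ℝ} (h0 : 5/6 < x) (h1 : x < 1) : Phi'' x ≤ 0 := by
  rw [Phi''_eq (by linarith) h1]
  have hQ : (0:ℝ) < (8/3)*x^2 - (8/3)*x + 159/161 := by nlinarith [sq_nonneg (x - 1/2)]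
  have hP : (0:ℝ) ≤ 5 - 36*x + 36*x^2 := by nlinarith
  have hD : (0:ℝ) < x * (1-x) * (3-2*x) * (1+2*x) * (9-8*x) * (1+8*x) := by
    have c1 : (0:ℝ) < x := by linarith
    have c2 : (0:ℝ) < 1-x := by linarith
    have c3 : (0:ℝ) < 3-2*x := by linarith
    have c4 : (0:ℝ) < 1+2*x := by linarith
    have c5 : (0:ℝ) < 9-8*x := by linarith
    have c6 : (0:ℝ) < 1+8*x := by linarith
    exact mul_pos (mul_pos (mul_pos (mul_pos (mul_pos c1 c2) c3) c4) c5) c6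
  apply div_nonpos_of_nonpos_of_nonneg _ hD.le
  nlinarith [mul_nonneg hP hQ.le]

lemma Phi''_nonneg_mid {x : ℝ} (h0 : 1/6 < x) (h1 : x < 5/6) : 0 ≤ Phi'' x := by
  rw [Phi''_eq (by linarith) (by linarith)]
  have hQ : (0:ℝ) < (8/3)*x^2 - (8/3)*x + 159/161 := by nlinarith [sq_nonneg (x - 1/2)]
  have hP : (5:ℝ) - 36*x + 36*x^2 ≤ 0 := by nlinarith
  have hD : (0:ℝ) < x * (1-x) * (3-2*x) * (1+2*x) * (9-8*x) * (1+8*x) := by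
    have c1 : (0:ℝ) < x := by linarith
    have c2 : (0:ℝ) < 1-x := by linarith
    have c3 : (0:ℝ) < 3-2*x := by linarith
    have c4 : (0:ℝ) < 1+2*x := by linarith
    have c5 : (0:ℝ) < 9-8*x := by linarith
    have c6 : (0:ℝ) < 1+8*x := by linarith
    exact mul_pos (mul_pos (mul_pos (mul_pos (mul_pos c1 c2) c3) c4) c5) c6
  apply div_nonneg _ hD.le
  nlinarith [mul_nonpos_of_nonpos_of_nonneg hP hQ.le]

lemma Phi_continuous : Continuous Phi := by
  unfold Phi
  fun_prop

lemma Phi_concave_left : ConcaveOn ℝ (Set.Icc (0:ℝ) (1/6)) Phi := by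
  apply concaveOn_of_hasDerivWithinAt2_nonpos (convex_Icc _ _) Phi_continuous.continuousOn
    (f' := Phi') (f'' := Phi'')
  · intro x hx
    rw [interior_Icc] at hx
    exact (Phi_hasDeriv ⟨hx.1, by linarith [hx.2]⟩).hasDerivWithinAt
  · intro x hx
    rw [interior_Icc] at hx
    exact (Phi'_hasDeriv ⟨hx.1, by linarith [hx.2]⟩).hasDerivWithinAt
  · intro x hx
    rw [interior_Icc] at hx
    exact Phi''_nonpos_left hx.1 hx.2

lemma Phi_concave_right : ConcaveOn ℝ (Set.Icc (5/6:ℝ) 1) Phi := by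
  apply concaveOn_of_hasDerivWithinAt2_nonpos (convex_Icc _ _) Phi_continuous.continuousOn
    (f' := Phi') (f'' := Phi'')
  · intro x hx
    rw [interior_Icc] at hx
    exact (Phi_hasDeriv ⟨by linarith [hx.1], hx.2⟩).hasDerivWithinAt
  · intro x hx
    rw [interior_Icc] at hx
    exact (Phi'_hasDeriv ⟨by linarith [hx.1], hx.2⟩).hasDerivWithinAt
  · intro x hx
    rw [interior_Icc] at hx
    exact Phi''_nonpos_right hx.1 hx.2

lemma Phi_convex_mid : ConvexOn ℝ (Set.Icc (1/6:ℝ) (5/6)) Phi := by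
  apply convexOn_of_hasDerivWithinAt2_nonneg (convex_Icc _ _) Phi_continuous.continuousOn
    (f' := Phi') (f'' := Phi'')
  · intro x hx
    rw [interior_Icc] at hx
    exact (Phi_hasDeriv ⟨by linarith [hx.1], by linarith [hx.2]⟩).hasDerivWithinAt
  · intro x hx
    rw [interior_Icc] at hx
    exact (Phi'_hasDeriv ⟨by linarith [hx.1], by linarith [hx.2]⟩).hasDerivWithinAt
  · intro x hx
    rw [interior_Icc] at hx
    exact Phi''_nonneg_mid hx.1 hx.2

lemma Phi_symm (a : ℝ) : Phi (1 - a) = Phi a := by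
  unfold Phi
  have E1 : (3:ℝ)/4 + -(3/4)*(1-a) = 0 + (3/4)*a := by ring
  have E2 : (1:ℝ)/4 + -(1/4)*(1-a) = 0 + (1/4)*a := by ring
  have E3 : (0:ℝ) + (1/4)*(1-a) = 1/4 + -(1/4)*a := by ring
  have E4 : (0:ℝ) + (3/4)*(1-a) = 3/4 + -(3/4)*a := by ring
  have E5 : (3:ℝ)/4 + -(1/2)*(1-a) = 1/4 + (1/2)*a := by ring
  have E6 : (1:ℝ)/4 + (1/2)*(1-a) = 3/4 + -(1/2)*a := by ring
  have E7 : (9:ℝ)/16 + -(1/2)*(1-a) = 1/16 + (1/2)*a := by ring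
  have E8 : (1:ℝ)/16 + (1/2)*(1-a) = 9/16 + -(1/2)*a := by ring
  rw [E1, E2, E3, E4, E5, E6, E7, E8]
  ring

lemma log3_lt : 200 * Real.log 3 < 317 * Real.log 2 := by
  have h : ((3:ℝ)^(200:ℕ)) < (2:ℝ)^(317:ℕ) := by exact_mod_cast (by decide : (3:ℕ)^200 < 2^317)
  have := Real.log_lt_log (by positivity) h
  rwa [Real.log_pow, Real.log_pow] at this
  
lemma log3_gt : 79 * Real.log 2 < 50 * Real.log 3 := by
  have h : ((2:ℝ)^(79:ℕ)) < (3:ℝ)^(50:ℕ) := by norm_num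
  have := Real.log_lt_log (by positivity) h
  rwa [Real.log_pow, Real.log_pow] at this

lemma log5_gt : 109 * Real.log 2 < 47 * Real.log 5 := by
  have h : ((2:ℝ)^(109:ℕ)) < (5:ℝ)^(47:ℕ) := by norm_num
  have := Real.log_lt_log (by positivity) h
  rwa [Real.log_pow, Real.log_pow] at this

lemma nml_vals :
    negMulLog (3/8:ℝ) = -(3/8)*(Real.log 3 - 3*Real.log 2) ∧
    negMulLog (1/8:ℝ) = (3/8)*Real.log 2 ∧
    negMulLog (1/2:ℝ) = (1/2)*Real.log 2 ∧
    negMulLog (5/16:ℝ) = -(5/16)*(Real.log 5 - 4*Real.log 2) ∧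
    negMulLog (1/4:ℝ) = (1/2)*Real.log 2 ∧
    negMulLog (3/4:ℝ) = -(3/4)*(Real.log 3 - 2*Real.log 2) ∧
    negMulLog (3/16:ℝ) = -(3/16)*(Real.log 3 - 4*Real.log 2) := by
  have l8 : Real.log (8:ℝ) = 3 * Real.log 2 := by
    rw [show (8:ℝ) = 2^(3:ℕ) by norm_num, Real.log_pow]; norm_num
  have l4 : Real.log (4:ℝ) = 2 * Real.log 2 := by
    rw [show (4:ℝ) = 2^(2:ℕ) by norm_num, Real.log_pow]; norm_num
  have l16 : Real.log (16:ℝ) = 4 * Real.log 2 := by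
    rw [show (16:ℝ) = 2^(4:ℕ) by norm_num, Real.log_pow]; norm_num
  have d1 : Real.log ((3:ℝ)/8) = Real.log 3 - Real.log 8 := Real.log_div (by norm_num) (by norm_num)
  have d2 : Real.log ((1:ℝ)/8) = Real.log 1 - Real.log 8 := Real.log_div (by norm_num) (by norm_num)
  have d3 : Real.log ((1:ℝ)/2) = Real.log 1 - Real.log 2 := Real.log_div (by norm_num) (by norm_num)
  have d4 : Real.log ((5:ℝ)/16) = Real.log 5 - Real.log 16 := Real.log_div (by norm_num) (by norm_num)
  have d5 : Real.log ((1:ℝ)/4) = Real.log 1 - Real.log 4 := Real.log_div (by norm_num) (by norm_num)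
  have d6 : Real.log ((3:ℝ)/4) = Real.log 3 - Real.log 4 := Real.log_div (by norm_num) (by norm_num)
  have d7 : Real.log ((3:ℝ)/16) = Real.log 3 - Real.log 16 := Real.log_div (by norm_num) (by norm_num)
  refine ⟨?_, ?_, ?_, ?_, ?_, ?_, ?_⟩ <;>
    simp only [negMulLog, d1, d2, d3, d4, d5, d6, d7, l8, l4, l16, Real.log_one] <;> ring

lemma Phi_half_pos : 0 < Phi (1/2) := by
  have h38 : (3:ℝ)/4 + -(3/4)*(1/2) = 3/8 := by norm_num
  have h18 : (1:ℝ)/4 + -(1/4)*(1/2) = 1/8 := by norm_num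
  have h18' : (0:ℝ) + (1/4)*(1/2) = 1/8 := by norm_num
  have h38' : (0:ℝ) + (3/4)*(1/2) = 3/8 := by norm_num
  have h12 : (3:ℝ)/4 + -(1/2)*(1/2) = 1/2 := by norm_num
  have h12' : (1:ℝ)/4 + (1/2)*(1/2) = 1/2 := by norm_num
  have h516 : (9:ℝ)/16 + -(1/2)*(1/2) = 5/16 := by norm_num
  have h516' : (1:ℝ)/16 + (1/2)*(1/2) = 5/16 := by norm_num
  obtain ⟨v1, v2, v3, v4, v5, v6, v7⟩ := nml_vals
  unfold Phi
  rw [h38, h18, h18', h38', h12, h12', h516, h516', v1, v2, v3, v4, v5, v6, v7]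
  unfold cbq
  have e : (265/1449 : ℝ) * (-(3/8)*(Real.log 3 - 3*Real.log 2)) + (265/1449) * ((3/8)*Real.log 2)
      + (265/1449) * ((3/8)*Real.log 2) + (265/1449) * (-(3/8)*(Real.log 3 - 3*Real.log 2))
      + (1-265/1449) * ((1/2)*Real.log 2) + (1-265/1449) * ((1/2)*Real.log 2)
      - (-(5/16)*(Real.log 5 - 4*Real.log 2)) - (-(5/16)*(Real.log 5 - 4*Real.log 2))
      + ((1/2)*Real.log 2 + (-(3/4)*(Real.log 3 - 2*Real.log 2)) - 2 * (-(3/16)*(Real.log 3 - 4*Real.log 2)))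
      = -(919/1449)*Real.log 2 - (1979/3864)*Real.log 3 + (5/8)*Real.log 5 := by ring
  rw [e]
  nlinarith [log3_lt, log5_gt, Real.log_pos (by norm_num : (1:ℝ) < 2), Real.log_pos (by norm_num : (1:ℝ) < 3)]

lemma Phi_zero : Phi 0 = 0 := by
  unfold Phi
  norm_num
  have h916 : (9:ℝ)/16 = (3/4) * (3/4) := by norm_num
  have h116 : (1:ℝ)/16 = (1/4) * (1/4) := by norm_num
  have h316 : (3:ℝ)/16 = (3/4) * (1/4) := by norm_num
  rw [h916, h116, h316, Real.negMulLog_mul, Real.negMulLog_mul, Real.negMulLog_mul]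
  ring

lemma Phi_ge_half {a : ℝ} (h1 : 1/6 ≤ a) (h2 : a ≤ 5/6) : Phi (1/2) ≤ Phi a := by
  have ha : a ∈ Set.Icc (1/6:ℝ) (5/6) := ⟨h1, h2⟩
  have ha' : 1 - a ∈ Set.Icc (1/6:ℝ) (5/6) := ⟨by linarith, by linarith⟩
  have := Phi_convex_mid.2 ha ha' (by norm_num : (0:ℝ) ≤ 1/2) (by norm_num : (0:ℝ) ≤ 1/2)
    (by norm_num)
  simp only [smul_eq_mul] at this
  have e : (1/2) * a + (1/2) * (1 - a) = (1/2 : ℝ) := by ring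
  rw [e, Phi_symm] at this
  linarith

lemma Phi_nonneg {a : ℝ} (h0 : 0 ≤ a) (h1 : a ≤ 1) : 0 ≤ Phi a := by
  have half := Phi_half_pos
  -- helper for the left concave piece
  have left : ∀ b : ℝ, 0 ≤ b → b ≤ 1/6 → 0 ≤ Phi b := by
    intro b hb0 hb1
    have h0m : (0:ℝ) ∈ Set.Icc (0:ℝ) (1/6) := by constructor <;> norm_num
    have h6m : (1/6:ℝ) ∈ Set.Icc (0:ℝ) (1/6) := by constructor <;> norm_num
    have ht0 : (0:ℝ) ≤ 1 - 6*b := by linarith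
    have ht1 : (0:ℝ) ≤ 6*b := by linarith
    have := Phi_concave_left.2 h0m h6m ht0 ht1 (by ring)
    simp only [smul_eq_mul] at this
    have e : (1 - 6*b) * 0 + 6*b * (1/6) = b := by ring
    rw [e, Phi_zero] at this
    have h16 : Phi (1/2) ≤ Phi (1/6) := Phi_ge_half (by norm_num) (by norm_num)
    nlinarith
  rcases le_or_gt a (1/6) with hA | hA
  · exact left a h0 hA
  rcases le_or_gt a (5/6) with hB | hB
  · linarith [Phi_ge_half hA.le hB]
  · have := left (1 - a) (by linarith) (by linarith)
    rwa [Phi_symm] at this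

/-- entropy summand in bits -/
def e2 (x : ℝ) : ℝ := -(x * Real.logb 2 x)

lemma e2_eq (x : ℝ) : e2 x = negMulLog x / Real.log 2 := by
  unfold e2 negMulLog Real.logb
  ring

lemma e2_zero : e2 0 = 0 := by simp [e2]

lemma e2_mul (t x : ℝ) : e2 (t*x) = t * e2 x + x * e2 t := by
  rw [e2_eq, e2_eq, e2_eq, Real.negMulLog_mul]
  ring

lemma log2_pos : (0:ℝ) < Real.log 2 := Real.log_pos (by norm_num)

lemma key_ineq (A B : ℝ) (hA : 0 ≤ A) (hB : 0 ≤ B) :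
    e2 (9/32*A + 1/32*B) + e2 (1/32*A + 9/32*B)
      + (e2 (3/32*A + 3/32*B) + e2 (3/32*A + 3/32*B))
      - (e2 (3/8*A + 1/8*B) + e2 (1/8*A + 3/8*B))
    ≤ cbq * ((e2 (3/8*A) + e2 (1/8*A) + e2 (1/8*B) + e2 (3/8*B))
        - (e2 (3/8*A + 1/8*B) + e2 (1/8*A + 3/8*B)))
      + (e2 (1/4) + e2 (3/4)) * ((A+B)/2) := by
  rcases eq_or_lt_of_le (add_nonneg hA hB) with h0 | hpos
  · -- A + B = 0 hence A = B = 0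
    have hA0 : A = 0 := by linarith
    have hB0 : B = 0 := by linarith
    subst hA0; subst hB0
    norm_num [e2_zero]
  · obtain ⟨t, a, ht, ha0, ha1, hA', hB'⟩ :
        ∃ t a : ℝ, 0 < t ∧ 0 ≤ a ∧ a ≤ 1 ∧ A = 2*t*(1-a) ∧ B = 2*t*a := by
      refine ⟨(A+B)/2, B/(A+B), by linarith, by positivity, ?_, by field_simp; ring, by field_simp⟩
      rw [div_le_one (by linarith)]
      linarith
    subst hA'; subst hB'
    have r1 : 9/32*(2*t*(1-a)) + 1/32*(2*t*a) = t * (9/16 + -(1/2)*a) := by ring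
    have r2 : 1/32*(2*t*(1-a)) + 9/32*(2*t*a) = t * (1/16 + (1/2)*a) := by ring
    have r3 : 3/32*(2*t*(1-a)) + 3/32*(2*t*a) = t * (3/16) := by ring
    have r4 : 3/8*(2*t*(1-a)) + 1/8*(2*t*a) = t * (3/4 + -(1/2)*a) := by ring
    have r5 : 1/8*(2*t*(1-a)) + 3/8*(2*t*a) = t * (1/4 + (1/2)*a) := by ring
    have r6 : 3/8*(2*t*(1-a)) = t * (3/4 + -(3/4)*a) := by ring
    have r7 : 1/8*(2*t*(1-a)) = t * (1/4 + -(1/4)*a) := by ring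
    have r8 : 1/8*(2*t*a) = t * (0 + (1/4)*a) := by ring
    have r9 : 3/8*(2*t*a) = t * (0 + (3/4)*a) := by ring
    have r10 : (2*t*(1-a) + 2*t*a)/2 = t := by ring
    rw [r1, r2, r3, r4, r5, r6, r7, r8, r9, r10]
    rw [e2_mul t (9/16 + -(1/2)*a), e2_mul t (1/16 + (1/2)*a), e2_mul t (3/16),
      e2_mul t (3/4 + -(1/2)*a), e2_mul t (1/4 + (1/2)*a), e2_mul t (3/4 + -(3/4)*a),
      e2_mul t (1/4 + -(1/4)*a), e2_mul t (0 + (1/4)*a), e2_mul t (0 + (3/4)*a)]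
    have hPhi := Phi_nonneg ha0 ha1
    have key : cbq * ((t * e2 (3/4 + -(3/4)*a) + (3/4 + -(3/4)*a) * e2 t
          + (t * e2 (1/4 + -(1/4)*a) + (1/4 + -(1/4)*a) * e2 t)
          + (t * e2 (0 + (1/4)*a) + (0 + (1/4)*a) * e2 t)
          + (t * e2 (0 + (3/4)*a) + (0 + (3/4)*a) * e2 t))
          - ((t * e2 (3/4 + -(1/2)*a) + (3/4 + -(1/2)*a) * e2 t)
            + (t * e2 (1/4 + (1/2)*a) + (1/4 + (1/2)*a) * e2 t)))
        + (e2 (1/4) + e2 (3/4)) * t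
        - ((t * e2 (9/16 + -(1/2)*a) + (9/16 + -(1/2)*a) * e2 t)
          + (t * e2 (1/16 + (1/2)*a) + (1/16 + (1/2)*a) * e2 t)
          + ((t * e2 (3/16) + 3/16 * e2 t) + (t * e2 (3/16) + 3/16 * e2 t))
          - ((t * e2 (3/4 + -(1/2)*a) + (3/4 + -(1/2)*a) * e2 t)
            + (t * e2 (1/4 + (1/2)*a) + (1/4 + (1/2)*a) * e2 t)))
        = t * Phi a / Real.log 2 := by
      unfold Phi
      rw [e2_eq (3/4 + -(3/4)*a), e2_eq (1/4 + -(1/4)*a), e2_eq (0 + (1/4)*a),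
        e2_eq (0 + (3/4)*a), e2_eq (3/4 + -(1/2)*a), e2_eq (1/4 + (1/2)*a),
        e2_eq (9/16 + -(1/2)*a), e2_eq (1/16 + (1/2)*a), e2_eq (3/16),
        e2_eq (1/4), e2_eq (3/4)]
      field_simp
      ring
    have hfinal : 0 ≤ t * Phi a / Real.log 2 := by positivity
    linarith


variable {n : ℕ}

def q1 (κ : Bool → Fin n → ℝ) : Bool × Bool × Bool × Fin n → ℝ :=
  fun w => srcDSBSN (1/4) (1/4) (w.1, w.2.1, w.2.2.1) * κ w.1 w.2.2.2

lemma pushY (κ : Bool → Fin n → ℝ) (hk1 : ∀ x, ∑ v, κ x v = 1) (y : Bool) :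
    pushf (q1 κ) (fun w => w.2.1) y = 1/2 := by
  unfold pushf q1 srcDSBSN
  simp only [Fintype.sum_prod_type, Fintype.sum_bool]
  cases y <;> simp [← Finset.mul_sum, hk1] <;> norm_num

lemma pushUX2 (κ : Bool → Fin n → ℝ) (u : Fin n) (x2 : Bool) :
    pushf (q1 κ) (fun w => (w.2.2.2, w.2.2.1)) (u, x2) =
      if x2 then 1/8 * κ false u + 3/8 * κ true u
      else 3/8 * κ false u + 1/8 * κ true u := by
  unfold pushf q1 srcDSBSN
  simp only [Fintype.sum_prod_type, Fintype.sum_bool, Prod.mk.injEq]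
  cases x2 <;> simp [Finset.sum_ite_eq'] <;> ring

lemma pushX2U (κ : Bool → Fin n → ℝ) (u : Fin n) (x2 : Bool) :
    pushf (q1 κ) (fun w => (w.2.2.1, w.2.2.2)) (x2, u) =
      if x2 then 1/8 * κ false u + 3/8 * κ true u
      else 3/8 * κ false u + 1/8 * κ true u := by
  unfold pushf q1 srcDSBSN
  simp only [Fintype.sum_prod_type, Fintype.sum_bool, Prod.mk.injEq]
  cases x2 <;> simp [Finset.sum_ite_eq'] <;> ring

lemma pushYUX2 (κ : Bool → Fin n → ℝ) (y : Bool) (u : Fin n) (x2 : Bool) :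
    pushf (q1 κ) (fun w => (w.2.1, (w.2.2.2, w.2.2.1))) (y, (u, x2)) =
      if y = x2 then (if y then 1/32 * κ false u + 9/32 * κ true u
                      else 9/32 * κ false u + 1/32 * κ true u)
      else 3/32 * κ false u + 3/32 * κ true u := by
  unfold pushf q1 srcDSBSN
  simp only [Fintype.sum_prod_type, Fintype.sum_bool, Prod.mk.injEq]
  cases y <;> cases x2 <;> simp [Finset.sum_ite_eq'] <;> ring

lemma pushX1X2U (κ : Bool → Fin n → ℝ) (x1 : Bool) (x2 : Bool) (u : Fin n) :
    pushf (q1 κ) (fun w => (w.1, (w.2.2.1, w.2.2.2))) (x1, (x2, u)) =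
      (if x1 = x2 then 3/8 else 1/8) * κ x1 u := by
  unfold pushf q1 srcDSBSN
  simp only [Fintype.sum_prod_type, Fintype.sum_bool, Prod.mk.injEq]
  cases x1 <;> cases x2 <;> simp [Finset.sum_ite_eq'] <;> ring


lemma Hent2_eq {α : Type*} [Fintype α] (p : α → ℝ) : Hent2 p = ∑ a, e2 (p a) := rfl

lemma e2_half : e2 (1/2 : ℝ) = 1/2 := by
  unfold e2
  rw [show ((1:ℝ)/2) = (2:ℝ)⁻¹ by norm_num, Real.logb_inv,
    Real.logb_self_eq_one (by norm_num)]
  norm_num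

lemma HY_eq (κ : Bool → Fin n → ℝ) (hk1 : ∀ x, ∑ v, κ x v = 1) :
    HRV2 (q1 κ) (fun w => w.2.1) = 1 := by
  unfold HRV2
  rw [Hent2_eq, Fintype.sum_bool, pushY κ hk1, pushY κ hk1, e2_half]
  norm_num

lemma HUX2_eq (κ : Bool → Fin n → ℝ) :
    HRV2 (q1 κ) (fun w => (w.2.2.2, w.2.2.1)) =
      ∑ u, (e2 (3/8 * κ false u + 1/8 * κ true u) + e2 (1/8 * κ false u + 3/8 * κ true u)) := by
  unfold HRV2
  rw [Hent2_eq, Fintype.sum_prod_type]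
  refine Finset.sum_congr rfl (fun u _ => ?_)
  rw [Fintype.sum_bool, pushUX2, pushUX2]
  simp only [if_true, if_false, Bool.false_eq_true]
  ring

lemma HX2U_eq (κ : Bool → Fin n → ℝ) :
    HRV2 (q1 κ) (fun w => (w.2.2.1, w.2.2.2)) =
      ∑ u, (e2 (3/8 * κ false u + 1/8 * κ true u) + e2 (1/8 * κ false u + 3/8 * κ true u)) := by
  unfold HRV2
  rw [Hent2_eq, Fintype.sum_prod_type, Fintype.sum_bool, ← Finset.sum_add_distrib]
  refine Finset.sum_congr rfl (fun u _ => ?_)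
  rw [pushX2U, pushX2U]
  simp only [if_true, if_false, Bool.false_eq_true]
  ring

lemma HYUX2_eq (κ : Bool → Fin n → ℝ) :
    HRV2 (q1 κ) (fun w => (w.2.1, (w.2.2.2, w.2.2.1))) =
      ∑ u, (e2 (9/32 * κ false u + 1/32 * κ true u) + e2 (1/32 * κ false u + 9/32 * κ true u)
        + (e2 (3/32 * κ false u + 3/32 * κ true u) + e2 (3/32 * κ false u + 3/32 * κ true u))) := by
  unfold HRV2
  rw [Hent2_eq, Fintype.sum_prod_type, Fintype.sum_bool, Fintype.sum_prod_type,
    Fintype.sum_prod_type, ← Finset.sum_add_distrib]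
  refine Finset.sum_congr rfl (fun u _ => ?_)
  rw [Fintype.sum_bool, Fintype.sum_bool, pushYUX2, pushYUX2, pushYUX2, pushYUX2]
  simp only [if_true, if_false, Bool.false_eq_true, Bool.true_eq_false, if_neg, reduceIte]
  ring

lemma HX1X2U_eq (κ : Bool → Fin n → ℝ) :
    HRV2 (q1 κ) (fun w => (w.1, (w.2.2.1, w.2.2.2))) =
      ∑ u, (e2 (3/8 * κ false u) + e2 (1/8 * κ false u)
        + (e2 (1/8 * κ true u) + e2 (3/8 * κ true u))) := by
  unfold HRV2
  rw [Hent2_eq, Fintype.sum_prod_type, Fintype.sum_bool, Fintype.sum_prod_type,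
    Fintype.sum_prod_type, Fintype.sum_bool, Fintype.sum_bool,
    ← Finset.sum_add_distrib, ← Finset.sum_add_distrib, ← Finset.sum_add_distrib]
  refine Finset.sum_congr rfl (fun u _ => ?_)
  rw [pushX1X2U, pushX1X2U, pushX1X2U, pushX1X2U]
  simp only [if_true, if_false, Bool.false_eq_true, Bool.true_eq_false, reduceIte]
  ring

lemma A1_bound (κ : Bool → Fin n → ℝ) (hk0 : ∀ x v, 0 ≤ κ x v)
    (hk1 : ∀ x, ∑ v, κ x v = 1)
    (hcon : condEntRV2 (q1 κ) (fun w => w.1) (fun w => (w.2.2.1, w.2.2.2)) ≤ 1/2) :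
    1 - cbq/2 - (e2 (1/4) + e2 (3/4))
      ≤ MIrv2 (q1 κ) (fun w => w.2.1) (fun w => (w.2.2.2, w.2.2.1)) := by
  unfold MIrv2
  unfold condEntRV2 at hcon
  rw [HX1X2U_eq, HX2U_eq] at hcon
  rw [HY_eq κ hk1, HUX2_eq, HYUX2_eq]
  -- pointwise bound
  have key : ∀ u ∈ Finset.univ (α := Fin n),
      (e2 (9/32 * κ false u + 1/32 * κ true u) + e2 (1/32 * κ false u + 9/32 * κ true u)
        + (e2 (3/32 * κ false u + 3/32 * κ true u) + e2 (3/32 * κ false u + 3/32 * κ true u)))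
      ≤ (cbq * ((e2 (3/8 * κ false u) + e2 (1/8 * κ false u)
            + (e2 (1/8 * κ true u) + e2 (3/8 * κ true u)))
          - (e2 (3/8 * κ false u + 1/8 * κ true u) + e2 (1/8 * κ false u + 3/8 * κ true u)))
        + (e2 (1/4) + e2 (3/4)) * ((κ false u + κ true u)/2))
        + (e2 (3/8 * κ false u + 1/8 * κ true u) + e2 (1/8 * κ false u + 3/8 * κ true u)) := by
    intro u _
    have h := key_ineq (κ false u) (κ true u) (hk0 false u) (hk0 true u)
    linarith
  have S := Finset.sum_le_sum key
  simp only [Finset.sum_add_distrib, Finset.sum_sub_distrib, ← Finset.mul_sum,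
    ← Finset.sum_div, hk1] at S hcon ⊢
  have hcb : (0:ℝ) ≤ cbq := by norm_num [cbq]
  nlinarith [S, hcon, mul_le_mul_of_nonneg_left hcon hcb]

def k1 : Bool → Fin 2 → ℝ := fun x v =>
  if x then (if v = 1 then 1 else 0) else (if v = 0 then 1 else 0)

def k2 : Bool → Fin 2 → Fin 2 → ℝ := fun x1 u v =>
  if (x1 = true ∧ u = 1) ∨ (x1 = false ∧ u = 0) then (if v = 0 then 2/3 else 1/3)
  else (if v = 1 then 1 else 0)

def q2 : Bool × Bool × Bool × Fin 2 × Fin 2 → ℝ :=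
  fun w => srcDSBSN (1/4) (1/4) (w.1, w.2.1, w.2.2.1) * k1 w.2.2.1 w.2.2.2.1
    * k2 w.1 w.2.2.2.1 w.2.2.2.2

lemma lb2self : Real.logb 2 (2:ℝ) = 1 := Real.logb_self_eq_one (by norm_num)

lemma lb14 : Real.logb 2 ((1:ℝ)/4) = -2 := by
  rw [show (1:ℝ)/4 = ((2:ℝ)^(2:ℕ))⁻¹ by norm_num, Real.logb_inv, Real.logb_pow, lb2self]
  norm_num

lemma lb18 : Real.logb 2 ((1:ℝ)/8) = -3 := by
  rw [show (1:ℝ)/8 = ((2:ℝ)^(3:ℕ))⁻¹ by norm_num, Real.logb_inv, Real.logb_pow, lb2self]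
  norm_num

lemma lb12 : Real.logb 2 ((1:ℝ)/2) = -1 := by
  rw [show (1:ℝ)/2 = ((2:ℝ)^(1:ℕ))⁻¹ by norm_num, Real.logb_inv, Real.logb_pow, lb2self]
  norm_num

lemma lb116 : Real.logb 2 ((1:ℝ)/16) = -4 := by
  rw [show (1:ℝ)/16 = ((2:ℝ)^(4:ℕ))⁻¹ by norm_num, Real.logb_inv, Real.logb_pow, lb2self]
  norm_num

lemma lb316 : Real.logb 2 ((3:ℝ)/16) = Real.logb 2 3 - 4 := by
  rw [Real.logb_div (by norm_num) (by norm_num),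
    show (16:ℝ) = (2:ℝ)^(4:ℕ) by norm_num, Real.logb_pow, lb2self]
  norm_num

lemma condEnt_q2 : condEntRV2 q2 (fun w => w.1) (fun w => (w.2.2.1, w.2.2.2)) = 1/2 := by
  unfold condEntRV2 HRV2 Hent2 pushf q2 srcDSBSN k1 k2
  simp only [Fintype.sum_prod_type, Fintype.sum_bool, Fin.sum_univ_two, Prod.mk.injEq]
  norm_num
  rw [lb14, lb18]
  norm_num

lemma MI_q2 : MIrv2 q2 (fun w => w.2.1) (fun w => (w.2.2.2, w.2.2.1))
    = (3/8) * Real.logb 2 3 - 1/2 := by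
  unfold MIrv2 HRV2 Hent2 pushf q2 srcDSBSN k1 k2
  simp only [Fintype.sum_prod_type, Fintype.sum_bool, Fin.sum_univ_two, Prod.mk.injEq]
  norm_num
  rw [lb14, lb18, lb12, lb116, lb316]
  ring

end T6

/-- **Theorem 6 (interaction helps under log-loss).**  There exist a source of the form
`(X1,X2) ~ DSBS(p)`, `Y1 = X1 ⊕ N`, `N ~ Ber(r)` (with `Y2` empty) and a log-loss
distortion level `D` (distortion pair `(∞, D)`) such that the optimal one-round sum
leakage initiated at agent A strictly exceeds the optimal two-round sum leakage
initiated at agent B: two rounds of interaction strictly reduce leakage. -/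
theorem theorem6_interaction_helps_logloss :
    ∃ p r D : ℝ, 0 < p ∧ p < 1 ∧ 0 < r ∧ r < 1 ∧ 0 ≤ D ∧
      LsumB2LL (srcDSBSN p r) D < LsumA1LL (srcDSBSN p r) D := by
  refine ⟨1/4, 1/4, 1/2, by norm_num, by norm_num, by norm_num, by norm_num, by norm_num, ?_⟩
  have hB2 : LsumB2LL (srcDSBSN (1/4) (1/4)) (1/2)
      ≤ (((3/8) * Real.logb 2 3 - 1/2 : ℝ) : EReal) := by
    apply sInf_le
    refine ⟨2, 2, T6.k1, T6.k2, ?_, ?_, ?_, ?_, ?_, ?_⟩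
    · intro x v
      unfold T6.k1
      split <;> split <;> norm_num
    · intro x
      unfold T6.k1
      cases x <;> simp [Fin.sum_univ_two]
    · intro x u v
      unfold T6.k2
      split <;> split <;> norm_num
    · intro x u
      unfold T6.k2
      split <;> simp [Fin.sum_univ_two] <;> norm_num
    · exact le_of_eq T6.condEnt_q2
    · exact congrArg (fun r : ℝ => (r : EReal)) T6.MI_q2.symm
  have hA1 : ((1 - T6.cbq/2 - (T6.e2 (1/4) + T6.e2 (3/4)) : ℝ) : EReal)
      ≤ LsumA1LL (srcDSBSN (1/4) (1/4)) (1/2) := by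
    apply le_sInf
    rintro L ⟨nU, κ, hk0, hk1, hcon, rfl⟩
    rw [EReal.coe_le_coe_iff]
    exact T6.A1_bound κ hk0 hk1 hcon
  have hL3 : (79:ℝ)/50 < Real.logb 2 3 := by
    rw [Real.logb, lt_div_iff₀ T6.log2_pos]
    linarith [T6.log3_gt]
  have E1 : T6.e2 (1/4:ℝ) = 1/2 := by
    unfold T6.e2
    rw [T6.lb14]
    norm_num
  have E2 : T6.e2 (3/4:ℝ) = 3/2 - (3/4) * Real.logb 2 3 := by
    unfold T6.e2
    rw [Real.logb_div (by norm_num) (by norm_num),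
      show (4:ℝ) = (2:ℝ)^(2:ℕ) by norm_num, Real.logb_pow, T6.lb2self]
    ring
  have hlt : ((3/8) * Real.logb 2 3 - 1/2 : ℝ)
      < (1 - T6.cbq/2 - (T6.e2 (1/4) + T6.e2 (3/4)) : ℝ) := by
    rw [E1, E2]
    unfold T6.cbq
    nlinarith [hL3]
  exact lt_of_le_of_lt hB2 (lt_of_lt_of_le (EReal.coe_lt_coe_iff.mpr hlt) hA1)

end
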